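/- For every integer k ≥ 3 and every graph G: G contains P_k as a contraction if and only if G has a P_k-suitable pair of vertices. -/

import Mathlib

open SimpleGraph

/-- `f` is an `H`-witness structure of `G`: every bag `f x` is nonempty and induces a connected
subgraph of `G`, the bags partition the vertex set of `G`, and for distinct `x`, `y` there is
an edge of `G` between the bags `f x` and `f y` if and only if `x` and `y` are adjacent in `H`. -/
def IsWitnessStructure {V W : Type} (G : SimpleGraph V) (H : SimpleGraph W)
    (f : W → Set V) : Prop :=
  (∀ x, (f x).Nonempty) ∧
  (∀ x, (G.induce (f x)).Connected) ∧
  (∀ v : V, ∃! x, v ∈ f x) ∧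
  (∀ x y, x ≠ y → ((∃ a ∈ f x, ∃ b ∈ f y, G.Adj a b) ↔ H.Adj x y))

/-- `G` contains `H` as a contraction: `G` has an `H`-witness structure. -/
def ContainsAsContraction {V W : Type} (G : SimpleGraph V) (H : SimpleGraph W) : Prop :=
  ∃ f : W → Set V, IsWitnessStructure G H f

/-- `(u, v)` is a `P_k`-suitable pair of `G`: `G` has a `P_k`-witness structure whose bag
at the first vertex of the path is `{u}` and whose bag at the last vertex is `{v}`. -/
def PkSuitable {V : Type} (k : ℕ) (G : SimpleGraph V) (u v : V) : Prop :=
  ∃ f : Fin k → Set V, IsWitnessStructure G (pathGraph k) f ∧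
    (∀ i : Fin k, (i : ℕ) = 0 → f i = {u}) ∧
    (∀ i : Fin k, (i : ℕ) = k - 1 → f i = {v})

lemma peel_abstract {W : Type} [Finite W] (H : SimpleGraph W) (hc : H.Connected)
    (r : W) (hex : ∃ w : W, w ≠ r) :
    ∃ u : W, u ≠ r ∧ ∀ v : W, v ≠ u → ∃ p : H.Walk r v, u ∉ p.support := by
  classical
  haveI : Fintype W := Fintype.ofFinite W
  obtain ⟨w0, hw0⟩ := hex
  have hne : (Finset.univ.filter (· ≠ r)).Nonempty := ⟨w0, by simp [hw0]⟩
  obtain ⟨u, hu, hmax⟩ := Finset.exists_max_image (Finset.univ.filter (· ≠ r)) (H.dist r) hne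
  simp only [Finset.mem_filter, Finset.mem_univ, true_and] at hu hmax
  refine ⟨u, hu, fun v hv => ?_⟩
  obtain ⟨p, hp⟩ := hc.exists_walk_length_eq_dist r v
  refine ⟨p, fun husup => ?_⟩
  have hdv : H.dist r v ≤ H.dist r u := by
    by_cases hvr : v = r
    · subst hvr; rw [SimpleGraph.dist_self]; exact Nat.zero_le _
    · exact hmax v hvr
  have h1 : H.dist r u ≤ (p.takeUntil u husup).length := dist_le _
  have h2 : (p.takeUntil u husup).length + (p.dropUntil u husup).length = p.length := by
    have h := congr_arg Walk.length (p.take_spec husup)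
    rwa [Walk.length_append] at h
  have h3 : (p.dropUntil u husup).length = 0 := by omega
  exact hv (Walk.eq_of_length_eq_zero h3).symm

lemma peel {V : Type} [Finite V] (G : SimpleGraph V) {S : Set V}
    (hS : (G.induce S).Connected) {r : V} (hr : r ∈ S) (hex : ∃ s ∈ S, s ≠ r) :
    ∃ u ∈ S, u ≠ r ∧ (G.induce (S \ {u})).Connected := by
  classical
  obtain ⟨s, hsS, hsr⟩ := hex
  obtain ⟨u, hur, hu⟩ := peel_abstract (G.induce S) hS ⟨r, hr⟩
    ⟨⟨s, hsS⟩, by simp [Subtype.ext_iff, hsr]⟩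
  refine ⟨u.1, u.2, fun h => hur (Subtype.ext h), ?_⟩
  have hrmem : r ∈ S \ {u.1} := ⟨hr, fun h => hur (Subtype.ext (by simpa using h)).symm⟩
  apply G.induce_connected_of_patches r hrmem
  intro v hv
  obtain ⟨p, hp⟩ := hu ⟨v, hv.1⟩ (fun h => hv.2 (by simpa using congr_arg Subtype.val h))
  set q : G.Walk r v := p.map (SimpleGraph.Embedding.induce S).toHom with hq
  have hsub : {x | x ∈ q.support} ⊆ S \ {u.1} := by
    intro x hx
    have hx' : x ∈ (p.map (SimpleGraph.Embedding.induce S).toHom).support := hx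
    rw [Walk.support_map, List.mem_map] at hx'
    obtain ⟨y, hy, rfl⟩ := hx'
    exact ⟨y.2, fun hxy => hp (by rwa [show y = u from Subtype.ext (by simpa using hxy)] at hy)⟩
  refine ⟨{x | x ∈ q.support}, hsub, q.start_mem_support, q.end_mem_support, ?_⟩
  exact (q.connected_induce_support).preconnected _ _

lemma exists_neighbor_in {V : Type} (G : SimpleGraph V) {S : Set V}
    (hS : (G.induce S).Connected) {u r : V} (hu : u ∈ S) (hr : r ∈ S) (hur : u ≠ r) :
    ∃ w ∈ S, w ≠ u ∧ G.Adj u w := by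
  obtain ⟨p⟩ := hS ⟨u, hu⟩ ⟨r, hr⟩
  have hnn : ¬ p.Nil := Walk.not_nil_of_ne (by simp [Subtype.ext_iff, hur])
  have hadj : (G.induce S).Adj ⟨u, hu⟩ (p.getVert 1) := Walk.adj_snd hnn
  have hGadj : G.Adj u (p.getVert 1).1 := hadj
  exact ⟨(p.getVert 1).1, (p.getVert 1).2, fun h => G.irrefl (h ▸ hGadj), hGadj⟩

lemma induce_singleton_connected {V : Type} (G : SimpleGraph V) (u : V) :
    (G.induce {u}).Connected := by
  haveI : Nonempty ↥({u} : Set V) := ⟨⟨u, rfl⟩⟩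
  refine ⟨fun a b => ?_⟩
  have : a = b := Subtype.ext (a.2.trans b.2.symm)
  exact this ▸ Reachable.refl _

lemma witness_comp_iso {V W W' : Type} {G : SimpleGraph V} {H : SimpleGraph W}
    {H' : SimpleGraph W'} (e : H' ≃g H) {f : W → Set V}
    (hf : IsWitnessStructure G H f) : IsWitnessStructure G H' (fun x => f (e x)) := by
  obtain ⟨h1, h2, h3, h4⟩ := hf
  refine ⟨fun x => h1 _, fun x => h2 _, fun v => ?_, fun x y hxy => ?_⟩
  · obtain ⟨x, hx, hux⟩ := h3 v
    exact ⟨e.symm x, by simpa using hx, fun y hy => e.toEquiv.injective (by simpa using hux _ hy)⟩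
  · exact (h4 _ _ (fun h => hxy (e.toEquiv.injective h))).trans e.map_adj_iff

def pathRev (k : ℕ) : pathGraph k ≃g pathGraph k :=
  ⟨Fin.revPerm, by
    intro a b
    simp only [Fin.revPerm_apply, pathGraph_adj, Fin.val_rev]
    omega⟩

lemma shrink {V : Type} [Finite V] (G : SimpleGraph V) {k : ℕ} (hk : 2 ≤ k)
    {f : Fin k → Set V} (hf : IsWitnessStructure G (pathGraph k) f) :
    ∃ (f' : Fin k → Set V) (u : V), IsWitnessStructure G (pathGraph k) f' ∧
      f' ⟨0, by omega⟩ = {u} ∧ ∀ i : Fin k, 2 ≤ (i : ℕ) → f' i = f i := by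
  classical
  set i0 : Fin k := ⟨0, by omega⟩ with hi0
  set i1 : Fin k := ⟨1, by omega⟩ with hi1
  have hv0 : (i0 : ℕ) = 0 := rfl
  have hv1 : (i1 : ℕ) = 1 := rfl
  have hne : i0 ≠ i1 := by
    intro h; have := congrArg Fin.val h; rw [hv0, hv1] at this; omega
  have hadj01 : (pathGraph k).Adj i0 i1 := by
    rw [pathGraph_adj]; left; rfl
  obtain ⟨r, hrf0, w0, hw0f1, hrw0⟩ := (hf.2.2.2 i0 i1 hne).mpr hadj01
  have hdisj : ∀ {x y : Fin k} {v : V}, v ∈ f x → v ∈ f y → x = y := by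
    intro x y v hx hy
    obtain ⟨z, -, hz⟩ := hf.2.2.1 v
    rw [hz x hx, hz y hy]
  by_cases hsing : ∃ s ∈ f i0, s ≠ r
  · obtain ⟨u, huf0, hur, hconn⟩ := peel G (hf.2.1 i0) hrf0 hsing
    obtain ⟨w, hwf0, hwu, huw⟩ := exists_neighbor_in G (hf.2.1 i0) huf0 hrf0 hur
    have hr' : r ∈ f i0 \ {u} := ⟨hrf0, fun h => hur ((by simpa using h : r = u)).symm⟩
    have hw' : w ∈ f i0 \ {u} := ⟨hwf0, by simpa using hwu⟩
    set f' : Fin k → Set V :=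
      fun i => if i = i0 then {u} else if i = i1 then f i1 ∪ (f i0 \ {u}) else f i with hf'
    have hf'0 : f' i0 = {u} := by simp [hf']
    have hf'1 : f' i1 = f i1 ∪ (f i0 \ {u}) := by simp [hf', hne.symm]
    have hf'o : ∀ i, i ≠ i0 → i ≠ i1 → f' i = f i := by
      intro i h0 h1; simp [hf', h0, h1]
    refine ⟨f', u, ⟨?_, ?_, ?_, ?_⟩, hf'0, ?_⟩
    · -- nonempty
      intro i
      by_cases h0 : i = i0
      · rw [h0, hf'0]; exact ⟨u, rfl⟩
      by_cases h1 : i = i1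
      · rw [h1, hf'1]; exact (hf.1 i1).inl
      · rw [hf'o i h0 h1]; exact hf.1 i
    · -- connected
      intro i
      by_cases h0 : i = i0
      · rw [h0, hf'0]; exact induce_singleton_connected G u
      by_cases h1 : i = i1
      · rw [h1, hf'1]
        exact connected_induce_union (hf.2.1 i1).preconnected hconn.preconnected hw0f1 hr' hrw0.symm
      · rw [hf'o i h0 h1]; exact hf.2.1 i
    · -- partition
      intro v
      obtain ⟨x, hx, hxu⟩ := hf.2.2.1 v
      by_cases hvu : v = u
      · refine ⟨i0, show v ∈ f' i0 by rw [hf'0]; exact hvu, ?_⟩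
        intro y hy
        replace hy : v ∈ f' y := hy
        by_cases hy0 : y = i0
        · exact hy0
        by_cases hy1 : y = i1
        · rw [hy1, hf'1] at hy
          rcases hy with hy | hy
          · exact absurd (hdisj hy (by rw [hvu]; exact huf0)) hne.symm
          · exact absurd hvu (by simpa using hy.2)
        · rw [hf'o y hy0 hy1] at hy
          exact absurd (hdisj hy (by rw [hvu]; exact huf0)) hy0
      by_cases hx0 : x = i0
      · have hxmem : v ∈ f i0 := by rw [← hx0]; exact hx
        refine ⟨i1, show v ∈ f' i1 by rw [hf'1]; exact Or.inr ⟨hxmem, by simpa using hvu⟩, ?_⟩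
        intro y hy
        replace hy : v ∈ f' y := hy
        by_cases hy0 : y = i0
        · rw [hy0, hf'0] at hy; exact absurd hy hvu
        by_cases hy1 : y = i1
        · exact hy1
        · rw [hf'o y hy0 hy1] at hy
          exact absurd (hdisj hy hxmem) hy0
      by_cases hx1 : x = i1
      · have hxmem : v ∈ f i1 := by rw [← hx1]; exact hx
        refine ⟨i1, show v ∈ f' i1 by rw [hf'1]; exact Or.inl hxmem, ?_⟩
        intro y hy
        replace hy : v ∈ f' y := hy
        by_cases hy0 : y = i0
        · rw [hy0, hf'0] at hy; exact absurd hy hvu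
        by_cases hy1 : y = i1
        · exact hy1
        · rw [hf'o y hy0 hy1] at hy
          exact absurd (hdisj hy hxmem) hy1
      · refine ⟨x, show v ∈ f' x by rw [hf'o x hx0 hx1]; exact hx, ?_⟩
        intro y hy
        replace hy : v ∈ f' y := hy
        by_cases hy0 : y = i0
        · rw [hy0, hf'0] at hy; exact absurd hy hvu
        by_cases hy1 : y = i1
        · rw [hy1, hf'1] at hy
          rcases hy with hy | hy
          · exact absurd (hdisj hx hy) hx1
          · exact absurd (hdisj hx hy.1) hx0
        · rw [hf'o y hy0 hy1] at hy
          exact hdisj hy hx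
    · -- edges
      have main : ∀ x y : Fin k, x ≠ y → y ≠ i0 → (y = i1 → x = i0) →
          ((∃ a ∈ f' x, ∃ b ∈ f' y, G.Adj a b) ↔ (pathGraph k).Adj x y) := by
        intro x y hxy hy0 hy1imp
        by_cases hx0 : x = i0
        · by_cases hy1 : y = i1
          · rw [hx0, hy1, hf'0, hf'1]
            exact iff_of_true ⟨u, rfl, w, Or.inr hw', huw⟩ hadj01
          · rw [hx0, hf'0, hf'o y hy0 hy1]
            have hxy0 : i0 ≠ y := by rw [← hx0]; exact hxy
            constructor
            · rintro ⟨a, ha, b, hb, hab⟩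
              have haa : a = u := ha
              exact (hf.2.2.2 i0 y hxy0).mp ⟨a, by rw [haa]; exact huf0, b, hb, hab⟩
            · intro h
              exfalso
              rw [pathGraph_adj] at h
              have h1 : (y : ℕ) ≠ 1 := fun hh => hy1 (Fin.ext (by rw [hh, hv1]))
              rw [hv0] at h
              omega
        by_cases hx1 : x = i1
        · have hy1 : y ≠ i1 := fun h => hxy (hx1.trans h.symm)
          rw [hx1, hf'1, hf'o y hy0 hy1]
          have hxy1 : i1 ≠ y := by rw [← hx1]; exact hxy
          constructor
          · rintro ⟨a, ha, b, hb, hab⟩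
            rcases ha with ha | ha
            · exact (hf.2.2.2 i1 y hxy1).mp ⟨a, ha, b, hb, hab⟩
            · exfalso
              have hadj0y : (pathGraph k).Adj i0 y :=
                (hf.2.2.2 i0 y (Ne.symm hy0)).mp ⟨a, ha.1, b, hb, hab⟩
              rw [pathGraph_adj] at hadj0y
              have h1 : (y : ℕ) ≠ 1 := fun hh => hy1 (Fin.ext (by rw [hh, hv1]))
              rw [hv0] at hadj0y
              omega
          · intro h
            obtain ⟨a, ha, b, hb, hab⟩ := (hf.2.2.2 i1 y hxy1).mpr h
            exact ⟨a, Or.inl ha, b, hb, hab⟩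
        · have hy1 : y ≠ i1 := fun h => hx0 (hy1imp h)
          rw [hf'o x hx0 hx1, hf'o y hy0 hy1]
          exact hf.2.2.2 x y hxy
      intro x y hxy
      have hswap : ∀ x y : Fin k, (∃ a ∈ f' x, ∃ b ∈ f' y, G.Adj a b) →
          (∃ a ∈ f' y, ∃ b ∈ f' x, G.Adj a b) := by
        rintro x y ⟨a, ha, b, hb, hab⟩; exact ⟨b, hb, a, ha, hab.symm⟩
      have hacomm : ∀ x y : Fin k, (pathGraph k).Adj x y ↔ (pathGraph k).Adj y x :=
        fun x y => ⟨Adj.symm, Adj.symm⟩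
      by_cases hy0 : y = i0
      · rw [show ((∃ a ∈ f' x, ∃ b ∈ f' y, G.Adj a b) ↔ (∃ a ∈ f' y, ∃ b ∈ f' x, G.Adj a b))
            from ⟨hswap x y, hswap y x⟩, hacomm]
        exact main y x hxy.symm (fun h => hxy (h.trans hy0.symm)) (fun _ => hy0)
      by_cases hy1 : y = i1
      · by_cases hx0 : x = i0
        · exact main x y hxy hy0 (fun _ => hx0)
        · rw [show ((∃ a ∈ f' x, ∃ b ∈ f' y, G.Adj a b) ↔ (∃ a ∈ f' y, ∃ b ∈ f' x, G.Adj a b))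
              from ⟨hswap x y, hswap y x⟩, hacomm]
          exact main y x hxy.symm hx0 (fun h => absurd (h.trans hy1.symm) hxy)
      · exact main x y hxy hy0 (fun h => absurd h hy1)
    · intro i hi
      refine hf'o i (fun h => by rw [h, hv0] at hi; omega) (fun h => by rw [h, hv1] at hi; omega)
  · push_neg at hsing
    have hfr : f i0 = {r} :=
      Set.eq_singleton_iff_unique_mem.mpr ⟨hrf0, fun s hs => hsing s hs⟩
    exact ⟨f, r, hf, hfr, fun _ _ => rfl⟩

theorem stmt_4 {V : Type} [Fintype V] (G : SimpleGraph V) (k : ℕ) (hk : 3 ≤ k) :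
    ContainsAsContraction G (pathGraph k) ↔ ∃ u v : V, PkSuitable k G u v := by
  constructor
  · rintro ⟨f, hf⟩
    have hk2 : 2 ≤ k := by omega
    obtain ⟨f1, u, hf1, hf10, hf1r⟩ := shrink G hk2 hf
    have hg : IsWitnessStructure G (pathGraph k) (fun i => f1 ((pathRev k) i)) :=
      witness_comp_iso (pathRev k) hf1
    obtain ⟨g1, v, hg1, hg10, hg1r⟩ := shrink G hk2 hg
    refine ⟨u, v, fun i => g1 ((pathRev k) i), witness_comp_iso (pathRev k) hg1, ?_, ?_⟩
    · intro i hi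
      have hrev : ((pathRev k) i : Fin k) = i.rev := rfl
      have hval : ((i.rev : Fin k) : ℕ) = k - 1 := by
        rw [Fin.val_rev, hi]
      have h2 : 2 ≤ ((i.rev : Fin k) : ℕ) := by omega
      have heq : g1 i.rev = f1 ((pathRev k) i.rev) := hg1r i.rev h2
      show g1 ((pathRev k) i) = {u}
      rw [hrev, heq]
      have : ((pathRev k) i.rev : Fin k) = i := by
        show i.rev.rev = i
        exact Fin.rev_rev i
      rw [this]
      have : i = (⟨0, by omega⟩ : Fin k) := Fin.ext (by rw [hi])
      rw [this, hf10]
    · intro i hi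
      have hrev : ((pathRev k) i : Fin k) = i.rev := rfl
      have hz : (i.rev : Fin k) = (⟨0, by omega⟩ : Fin k) := by
        apply Fin.ext
        rw [Fin.val_rev, hi]
        have h0 : ((⟨0, by omega⟩ : Fin k) : ℕ) = 0 := rfl
        rw [h0]
        omega
      show g1 ((pathRev k) i) = {v}
      rw [hrev, hz, hg10]
  · rintro ⟨u, v, f, hf, -, -⟩
    exact ⟨f, hf⟩
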